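/- Let n ≥ 1 and let Φ = {e_i − e_j : i, j ∈ Fin n, i ≠ j} ⊆ ℝ^n (the root system of type A_{n−1}). The map sending a topology τ on Fin n to the set S_τ = {e_i − e_j : i ≠ j and i lies in the τ-closure of {j}} is a bijection from the set of topologies on Fin n onto the set of closed subsets of Φ. -/

import Mathlib

/-- The root system of type `A_{n-1}` in `ℝ^n`: the vectors `e_i - e_j` for `i ≠ j`. -/
def typeARoots (n : ℕ) : Set (Fin n → ℝ) :=
  {v | ∃ i j : Fin n, i ≠ j ∧ v = Pi.single i (1 : ℝ) - Pi.single j (1 : ℝ)}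

/-- The subset of the root system of type `A_{n-1}` associated to a topology `τ` on
`Fin n`: the roots `e_i - e_j` with `i ≠ j` and `i` in the `τ`-closure of `{j}`. -/
def topSet (n : ℕ) (τ : TopologicalSpace (Fin n)) : Set (Fin n → ℝ) :=
  {v | ∃ i j : Fin n, i ≠ j ∧ i ∈ @closure (Fin n) τ {j} ∧
    v = Pi.single i (1 : ℝ) - Pi.single j (1 : ℝ)}

namespace TopSetAux

variable {n : ℕ}

lemma root_apply (i j x : Fin n) :
    (Pi.single i (1 : ℝ) - Pi.single j (1 : ℝ) : Fin n → ℝ) x =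
      (if x = i then (1 : ℝ) else 0) - (if x = j then (1 : ℝ) else 0) := by
  simp [Pi.single_apply]

lemma root_ne_zero {i j : Fin n} (h : i ≠ j) :
    (Pi.single i (1 : ℝ) - Pi.single j (1 : ℝ) : Fin n → ℝ) ≠ 0 := by
  intro hz
  have := congrFun hz i
  rw [root_apply] at this
  simp [h] at this

lemma root_inj {i j k l : Fin n} (hij : i ≠ j) (hkl : k ≠ l)
    (h : (Pi.single i (1 : ℝ) - Pi.single j (1 : ℝ) : Fin n → ℝ)
        = Pi.single k (1 : ℝ) - Pi.single l (1 : ℝ)) :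
    i = k ∧ j = l := by
  have hi := congrFun h i
  have hj := congrFun h j
  rw [root_apply, root_apply] at hi hj
  simp only [if_pos rfl, if_neg hij, if_neg (Ne.symm hij)] at hi hj
  constructor
  · by_contra hik
    simp [Ne.symm, hik] at hi
    split_ifs at hi <;> norm_num at hi
  · by_contra hjl
    simp [hjl] at hj
    split_ifs at hj <;> norm_num at hj

/-- Which sums of two roots are roots. -/
lemma sum_cases {i j k l : Fin n} (hij : i ≠ j) (hkl : k ≠ l)
    (h : (Pi.single i (1 : ℝ) - Pi.single j 1) + (Pi.single k (1 : ℝ) - Pi.single l 1)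
        ∈ typeARoots n) :
    (j = k ∧ i ≠ l) ∨ (i = l ∧ k ≠ j) := by
  obtain ⟨a, b, hab, heq⟩ := h
  by_cases hjk : j = k
  · left
    refine ⟨hjk, ?_⟩
    rintro rfl
    subst hjk
    rw [sub_add_sub_cancel, sub_self] at heq
    exact root_ne_zero hab heq.symm
  · right
    by_cases hil : i = l
    · exact ⟨hil, fun h' => hjk h'.symm⟩
    · exfalso
      -- all of i≠j, k≠l, j≠k, i≠l hold; derive a contradiction.
      have hik : i ≠ k := by
        intro hik
        have := congrFun heq i
        rw [root_apply] at this
        simp only [Pi.add_apply, root_apply, if_pos rfl, if_neg hij, ← hik, if_pos rfl,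
          if_neg hil] at this
        split_ifs at this <;> norm_num at this
      have hjl : j ≠ l := by
        intro hjl
        have := congrFun heq j
        rw [root_apply] at this
        simp only [Pi.add_apply, root_apply, if_neg (Ne.symm hij), if_pos rfl, if_neg hjk,
          ← hjl, if_pos rfl] at this
        split_ifs at this <;> norm_num at this
      have hia : i = a := by
        by_contra hia
        have := congrFun heq i
        rw [root_apply] at this
        simp only [Pi.add_apply, root_apply, if_pos rfl, if_neg hij, if_neg hik, if_neg hil,
          if_neg hia] at this
        split_ifs at this <;> norm_num at this
      have hka : k = a := by
        by_contra hka
        have := congrFun heq k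
        rw [root_apply] at this
        simp only [Pi.add_apply, root_apply, if_neg (Ne.symm hik), if_neg (Ne.symm hjk),
          if_pos rfl, if_neg hkl, if_neg hka] at this
        split_ifs at this <;> norm_num at this
      exact hik (hia.trans hka.symm)

/-- The topology on `Fin n` built from a relation `R`: a set is open iff it is
upward closed for `R` (in the sense that `a ∈ U` and `R a b` imply `b ∈ U`). -/
def mkTop (R : Fin n → Fin n → Prop) : TopologicalSpace (Fin n) where
  IsOpen U := ∀ a ∈ U, ∀ b, R a b → b ∈ U
  isOpen_univ := fun _ _ b _ => Set.mem_univ b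
  isOpen_inter := fun U V hU hV a ha b hab => ⟨hU a ha.1 b hab, hV a ha.2 b hab⟩
  isOpen_sUnion := fun 𝒮 h a ha b hab => by
    obtain ⟨U, hU, haU⟩ := ha
    exact ⟨U, hU, h U hU a haU b hab⟩

lemma mkTop_closure_singleton (R : Fin n → Fin n → Prop)
    (htrans : ∀ {a b c}, R a b → R b c → a ≠ c → R a c) (j : Fin n) :
    @closure (Fin n) (mkTop R) {j} = insert j {i | R i j} := by
  letI := mkTop R
  have hclosed : IsClosed (insert j {i | R i j}) := by
    rw [← isOpen_compl_iff]
    intro a ha b hab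
    simp only [Set.mem_compl_iff, Set.mem_insert_iff, Set.mem_setOf_eq, not_or] at ha ⊢
    obtain ⟨haj, hRaj⟩ := ha
    constructor
    · rintro rfl; exact hRaj hab
    · intro hRbj; exact hRaj (htrans hab hRbj haj)
  apply subset_antisymm
  · exact closure_minimal (by simp) hclosed
  · intro i hi
    rcases hi with rfl | hRij
    · exact subset_closure rfl
    · by_contra hic
      have hjc : j ∈ closure {j} := subset_closure rfl
      have hopen : IsOpen ((closure {j} : Set (Fin n))ᶜ) := isClosed_closure.isOpen_compl
      exact (hopen i hic j hRij) hjc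

lemma closure_eq_biUnion {α : Type*} [TopologicalSpace α] [Finite α] (C : Set α) :
    closure C = ⋃ j ∈ C, closure {j} := by
  conv_lhs => rw [show C = ⋃ j ∈ C, {j} by simp]
  exact (Set.toFinite C).closure_biUnion _

end TopSetAux

/-- The map `τ ↦ S_τ` is a bijection from the topologies on `Fin n` onto
the closed subsets of the root system of type `A_{n-1}`. -/
theorem topSet_bijOn (n : ℕ) (hn : 1 ≤ n) :
    Set.BijOn (fun τ : TopologicalSpace (Fin n) => topSet n τ) Set.univ
      {S : Set (Fin n → ℝ) | S ⊆ typeARoots n ∧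
        ∀ α ∈ S, ∀ β ∈ S, α + β ∈ typeARoots n → α + β ∈ S} := by
  classical
  refine ⟨?_, ?_, ?_⟩
  · -- MapsTo
    rintro τ -
    letI := τ
    constructor
    · rintro v ⟨i, j, hij, -, rfl⟩
      exact ⟨i, j, hij, rfl⟩
    · rintro α ⟨i, j, hij, hicl, rfl⟩ β ⟨k, l, hkl, hkcl, rfl⟩ hsum
      rcases TopSetAux.sum_cases hij hkl hsum with ⟨rfl, hil⟩ | ⟨rfl, hkj⟩
      · refine ⟨i, l, hil, ?_, by rw [sub_add_sub_cancel]⟩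
        have : closure ({j} : Set (Fin n)) ⊆ closure {l} := by
          rw [← closure_closure (s := ({l} : Set (Fin n)))]
          exact closure_mono (Set.singleton_subset_iff.2 hkcl)
        exact this hicl
      · refine ⟨k, j, hkj, ?_, by rw [add_comm, sub_add_sub_cancel]⟩
        have : closure ({i} : Set (Fin n)) ⊆ closure {j} := by
          rw [← closure_closure (s := ({j} : Set (Fin n)))]
          exact closure_mono (Set.singleton_subset_iff.2 hicl)
        exact this hkcl
  · -- InjOn
    rintro τ - τ' - h
    simp only at h
    have hsing : ∀ j : Fin n, @closure _ τ {j} = @closure _ τ' {j} := by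
      intro j
      ext i
      by_cases hij : i = j
      · subst hij
        exact iff_of_true (@subset_closure _ τ {i} i (Set.mem_singleton i)) (@subset_closure _ τ' {i} i (Set.mem_singleton i))
      · constructor
        · intro hi
          have : (Pi.single i (1 : ℝ) - Pi.single j 1) ∈ topSet n τ := ⟨i, j, hij, hi, rfl⟩
          rw [h] at this
          obtain ⟨i', j', hij', hcl', heq'⟩ := this
          obtain ⟨hi', hj'⟩ := TopSetAux.root_inj hij' hij heq'.symm
          rwa [hi', hj'] at hcl'
        · intro hi
          have : (Pi.single i (1 : ℝ) - Pi.single j 1) ∈ topSet n τ' := ⟨i, j, hij, hi, rfl⟩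
          rw [← h] at this
          obtain ⟨i', j', hij', hcl', heq'⟩ := this
          obtain ⟨hi', hj'⟩ := TopSetAux.root_inj hij' hij heq'.symm
          rwa [hi', hj'] at hcl'
    have hall : ∀ C : Set (Fin n), @closure _ τ C = @closure _ τ' C := by
      intro C
      rw [@TopSetAux.closure_eq_biUnion _ τ _ C, @TopSetAux.closure_eq_biUnion _ τ' _ C]
      exact Set.iUnion₂_congr fun j _ => hsing j
    apply TopologicalSpace.ext_isClosed
    intro s
    rw [← @closure_eq_iff_isClosed _ τ s, ← @closure_eq_iff_isClosed _ τ' s, hall s]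
  · -- SurjOn
    rintro S ⟨hSsub, hSclosed⟩
    set R : Fin n → Fin n → Prop :=
      fun i j => (Pi.single i (1 : ℝ) - Pi.single j 1) ∈ S with hR
    have htrans : ∀ {a b c : Fin n}, R a b → R b c → a ≠ c → R a c := by
      intro a b c hab hbc hac
      have := hSclosed _ hab _ hbc (⟨a, c, hac, by rw [sub_add_sub_cancel]⟩)
      rwa [sub_add_sub_cancel] at this
    refine ⟨TopSetAux.mkTop R, Set.mem_univ _, ?_⟩
    simp only
    ext v
    constructor
    · rintro ⟨i, j, hij, hcl, rfl⟩
      rw [TopSetAux.mkTop_closure_singleton R htrans] at hcl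
      rcases hcl with rfl | hRij
      · exact absurd rfl hij
      · exact hRij
    · intro hv
      obtain ⟨i, j, hij, rfl⟩ := hSsub hv
      refine ⟨i, j, hij, ?_, rfl⟩
      rw [TopSetAux.mkTop_closure_singleton R htrans]
      exact Set.mem_insert_iff.2 (Or.inr hv)
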